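/- The map χ : H_{n,D}^2 → G_{n,P}^2, defined on a word β = T_0 a_{i_1j_1} T_1 ⋯ T_{m-1} a_{i_mj_m} T_m (where each T_k is a product of τ's) by χ(β) = a_{i_1j_1}^{ε_1} ⋯ a_{i_mj_m}^{ε_m} with ε_k ≡ N_{i_k} + N_{j_k} mod 2, where N_{i_k} is the number of occurrences of τ_{i_k} in T_0,…,T_{k-1}, is well-defined (independent of the choice of word representing β). -/

import Mathlib

/-- Index type for the generators `a_{ij}`: two-element subsets of `Fin n`. -/
abbrev PairIdx (n : ℕ) := {s : Finset (Fin n) // s.card = 2}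

/-- The unordered pair `{i,j}` as an index. -/
def mkPair {n : ℕ} (i j : Fin n) (h : i ≠ j) : PairIdx n := ⟨{i, j}, Finset.card_pair h⟩

/-- Relations of the group `G_n^2`. -/
def gn2Rels (n : ℕ) : Set (FreeGroup (PairIdx n)) :=
  {r | (∃ (i j : Fin n) (h : i ≠ j),
          r = FreeGroup.of (mkPair i j h) * FreeGroup.of (mkPair i j h)) ∨
       (∃ (i j k l : Fin n) (hij : i ≠ j) (hkl : k ≠ l),
          i ≠ k ∧ i ≠ l ∧ j ≠ k ∧ j ≠ l ∧
          r = FreeGroup.of (mkPair i j hij) * FreeGroup.of (mkPair k l hkl) *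
              (FreeGroup.of (mkPair i j hij))⁻¹ * (FreeGroup.of (mkPair k l hkl))⁻¹) ∨
       (∃ (i j k : Fin n) (hij : i ≠ j) (hik : i ≠ k) (hjk : j ≠ k),
          r = FreeGroup.of (mkPair i j hij) * FreeGroup.of (mkPair i k hik) *
              FreeGroup.of (mkPair j k hjk) *
              (FreeGroup.of (mkPair j k hjk) * FreeGroup.of (mkPair i k hik) *
               FreeGroup.of (mkPair i j hij))⁻¹)}

/-- The group `G_n^2`. -/
abbrev Gn2 (n : ℕ) := PresentedGroup (gn2Rels n)

/-- The generator `a_{ij}` of `G_n^2`. -/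
def A2 {n : ℕ} (i j : Fin n) (h : i ≠ j) : Gn2 n := PresentedGroup.of (mkPair i j h)

/-- Relations of the group `G_{n,P}^2` (`G_n^2` with parity). -/
def gnP2Rels (n : ℕ) : Set (FreeGroup (PairIdx n × ZMod 2)) :=
  {r | (∃ (i j : Fin n) (h : i ≠ j) (ε : ZMod 2),
          r = FreeGroup.of (mkPair i j h, ε) * FreeGroup.of (mkPair i j h, ε)) ∨
       (∃ (i j k l : Fin n) (hij : i ≠ j) (hkl : k ≠ l) (ε₁ ε₂ : ZMod 2),
          i ≠ k ∧ i ≠ l ∧ j ≠ k ∧ j ≠ l ∧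
          r = FreeGroup.of (mkPair i j hij, ε₁) * FreeGroup.of (mkPair k l hkl, ε₂) *
              (FreeGroup.of (mkPair i j hij, ε₁))⁻¹ * (FreeGroup.of (mkPair k l hkl, ε₂))⁻¹) ∨
       (∃ (i j k : Fin n) (hij : i ≠ j) (hik : i ≠ k) (hjk : j ≠ k)
          (εij εik εjk : ZMod 2), εij + εik + εjk = 0 ∧
          r = FreeGroup.of (mkPair i j hij, εij) * FreeGroup.of (mkPair i k hik, εik) *
              FreeGroup.of (mkPair j k hjk, εjk) *
              (FreeGroup.of (mkPair j k hjk, εjk) * FreeGroup.of (mkPair i k hik, εik) *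
               FreeGroup.of (mkPair i j hij, εij))⁻¹)}

/-- The group `G_{n,P}^2`. -/
abbrev GnP2 (n : ℕ) := PresentedGroup (gnP2Rels n)

/-- The generator `a_{ij}^ε` of `G_{n,P}^2`. -/
def AP {n : ℕ} (i j : Fin n) (h : i ≠ j) (ε : ZMod 2) : GnP2 n :=
  PresentedGroup.of (mkPair i j h, ε)

/-- Alphabet of `G_{n,D}^2`: crossing generators `a_{ij}` and point generators `τ_i`. -/
abbrev DIdx (n : ℕ) := PairIdx n ⊕ Fin n

/-- Relations of the group `G_{n,D}^2` (`G_n^2` with points). -/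
def gnD2Rels (n : ℕ) : Set (FreeGroup (DIdx n)) :=
  {r | (∃ (i j : Fin n) (h : i ≠ j),
          r = FreeGroup.of (Sum.inl (mkPair i j h) : DIdx n) *
              FreeGroup.of (Sum.inl (mkPair i j h) : DIdx n)) ∨
       (∃ (i j k l : Fin n) (hij : i ≠ j) (hkl : k ≠ l),
          i ≠ k ∧ i ≠ l ∧ j ≠ k ∧ j ≠ l ∧
          r = FreeGroup.of (Sum.inl (mkPair i j hij) : DIdx n) *
              FreeGroup.of (Sum.inl (mkPair k l hkl) : DIdx n) *
              (FreeGroup.of (Sum.inl (mkPair i j hij) : DIdx n))⁻¹ *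
              (FreeGroup.of (Sum.inl (mkPair k l hkl) : DIdx n))⁻¹) ∨
       (∃ (i j k : Fin n) (hij : i ≠ j) (hik : i ≠ k) (hjk : j ≠ k),
          r = FreeGroup.of (Sum.inl (mkPair i j hij) : DIdx n) *
              FreeGroup.of (Sum.inl (mkPair i k hik) : DIdx n) *
              FreeGroup.of (Sum.inl (mkPair j k hjk) : DIdx n) *
              (FreeGroup.of (Sum.inl (mkPair j k hjk) : DIdx n) *
               FreeGroup.of (Sum.inl (mkPair i k hik) : DIdx n) *
               FreeGroup.of (Sum.inl (mkPair i j hij) : DIdx n))⁻¹) ∨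
       (∃ i : Fin n,
          r = FreeGroup.of (Sum.inr i : DIdx n) * FreeGroup.of (Sum.inr i : DIdx n)) ∨
       (∃ i j : Fin n,
          r = FreeGroup.of (Sum.inr i : DIdx n) * FreeGroup.of (Sum.inr j : DIdx n) *
              (FreeGroup.of (Sum.inr i : DIdx n))⁻¹ * (FreeGroup.of (Sum.inr j : DIdx n))⁻¹) ∨
       (∃ (i j : Fin n) (h : i ≠ j),
          r = FreeGroup.of (Sum.inr i : DIdx n) * FreeGroup.of (Sum.inr j : DIdx n) *
              FreeGroup.of (Sum.inl (mkPair i j h) : DIdx n) *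
              FreeGroup.of (Sum.inr j : DIdx n) * FreeGroup.of (Sum.inr i : DIdx n) *
              (FreeGroup.of (Sum.inl (mkPair i j h) : DIdx n))⁻¹) ∨
       (∃ (i j k : Fin n) (h : i ≠ j), k ≠ i ∧ k ≠ j ∧
          r = FreeGroup.of (Sum.inl (mkPair i j h) : DIdx n) *
              FreeGroup.of (Sum.inr k : DIdx n) *
              (FreeGroup.of (Sum.inl (mkPair i j h) : DIdx n))⁻¹ *
              (FreeGroup.of (Sum.inr k : DIdx n))⁻¹)}

/-- The group `G_{n,D}^2`. -/
abbrev GnD2 (n : ℕ) := PresentedGroup (gnD2Rels n)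

/-- The generator `a_{ij}` of `G_{n,D}^2`. -/
def AD {n : ℕ} (i j : Fin n) (h : i ≠ j) : GnD2 n := PresentedGroup.of (Sum.inl (mkPair i j h))

/-- The generator `τ_i` of `G_{n,D}^2`. -/
def T {n : ℕ} (i : Fin n) : GnD2 n := PresentedGroup.of (Sum.inr i)

/-- The number of occurrences of `τ_i` (with either sign) in a word over the alphabet of
`G_{n,D}^2`. -/
def tauCount {n : ℕ} (i : Fin n) (L : List (DIdx n × Bool)) : ℕ :=
  L.countP (fun p => p.1 = Sum.inr i)

/-- The image of a word in `G_{n,D}^2`. -/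
def mkD (n : ℕ) (L : List (DIdx n × Bool)) : GnD2 n :=
  PresentedGroup.mk (gnD2Rels n) (FreeGroup.mk L)

/-- The word-level map `χ`: reading a word over the alphabet of `G_{n,D}^2` from left to
right (and keeping, for each strand `i`, the running parity `N i` of the number of `τ_i`'s
seen so far), each crossing letter `a_{ij}` is sent to `a_{ij}^{N i + N j}` in `G_{n,P}^2`
and the `τ`'s are dropped. -/
def chiWord (n : ℕ) : List (DIdx n × Bool) → (Fin n → ZMod 2) → GnP2 n
  | [], _ => 1
  | (Sum.inl s, _) :: L, N =>
      PresentedGroup.of (s, ∑ x ∈ s.1, N x) * chiWord n L N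
  | (Sum.inr i, _) :: L, N =>
      chiWord n L (Function.update N i (N i + 1))


section Stmt7Aux

variable {n : ℕ}

lemma rel_one {α : Type*} {rels : Set (FreeGroup α)} {r : FreeGroup α} (hr : r ∈ rels) :
    PresentedGroup.mk rels r = 1 :=
  (QuotientGroup.eq_one_iff _).mpr (Subgroup.subset_normalClosure hr)

lemma zmod2_triple (a b c x y z : ZMod 2) (h : a + b + c = 0) :
    (a + (x + y)) + (b + (x + z)) + (c + (y + z)) = 0 := by
  revert a b c x y z; decide

/-- the target map on generators for the shift automorphism -/
def shiftF (v : Fin n → ZMod 2) : PairIdx n × ZMod 2 → GnP2 n :=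
  fun p => PresentedGroup.of (p.1, p.2 + ∑ x ∈ p.1.1, v x)

lemma shift_rels (v : Fin n → ZMod 2) :
    ∀ r ∈ gnP2Rels n, FreeGroup.lift (shiftF v) r = 1 := by
  rintro r (⟨i, j, h, ε, rfl⟩ | ⟨i, j, k, l, hij, hkl, ε₁, ε₂, h1, h2, h3, h4, rfl⟩ |
    ⟨i, j, k, hij, hik, hjk, εij, εik, εjk, hsum, rfl⟩)
  · have h1 : (FreeGroup.of (mkPair i j h, ε + ∑ x ∈ (mkPair i j h).1, v x) *
        FreeGroup.of (mkPair i j h, ε + ∑ x ∈ (mkPair i j h).1, v x)) ∈ gnP2Rels n :=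
      Or.inl ⟨i, j, h, _, rfl⟩
    have := rel_one h1
    simp only [map_mul, FreeGroup.lift_apply_of, shiftF] at this ⊢
    exact this
  · have h1 : (FreeGroup.of (mkPair i j hij, ε₁ + ∑ x ∈ (mkPair i j hij).1, v x) *
        FreeGroup.of (mkPair k l hkl, ε₂ + ∑ x ∈ (mkPair k l hkl).1, v x) *
        (FreeGroup.of (mkPair i j hij, ε₁ + ∑ x ∈ (mkPair i j hij).1, v x))⁻¹ *
        (FreeGroup.of (mkPair k l hkl, ε₂ + ∑ x ∈ (mkPair k l hkl).1, v x))⁻¹) ∈ gnP2Rels n :=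
      Or.inr (Or.inl ⟨i, j, k, l, hij, hkl, _, _, h1, h2, h3, h4, rfl⟩)
    have := rel_one h1
    simp only [map_mul, map_inv, FreeGroup.lift_apply_of, shiftF] at this ⊢
    exact this
  · have hsum' : (εij + ∑ x ∈ (mkPair i j hij).1, v x) + (εik + ∑ x ∈ (mkPair i k hik).1, v x) +
        (εjk + ∑ x ∈ (mkPair j k hjk).1, v x) = 0 := by
      show (εij + ∑ x ∈ ({i, j} : Finset (Fin n)), v x) +
        (εik + ∑ x ∈ ({i, k} : Finset (Fin n)), v x) +
        (εjk + ∑ x ∈ ({j, k} : Finset (Fin n)), v x) = 0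
      rw [Finset.sum_pair hij, Finset.sum_pair hik, Finset.sum_pair hjk]
      exact zmod2_triple _ _ _ _ _ _ hsum
    have h1 : (FreeGroup.of (mkPair i j hij, εij + ∑ x ∈ (mkPair i j hij).1, v x) *
        FreeGroup.of (mkPair i k hik, εik + ∑ x ∈ (mkPair i k hik).1, v x) *
        FreeGroup.of (mkPair j k hjk, εjk + ∑ x ∈ (mkPair j k hjk).1, v x) *
        (FreeGroup.of (mkPair j k hjk, εjk + ∑ x ∈ (mkPair j k hjk).1, v x) *
         FreeGroup.of (mkPair i k hik, εik + ∑ x ∈ (mkPair i k hik).1, v x) *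
         FreeGroup.of (mkPair i j hij, εij + ∑ x ∈ (mkPair i j hij).1, v x))⁻¹) ∈ gnP2Rels n :=
      Or.inr (Or.inr ⟨i, j, k, hij, hik, hjk, _, _, _, hsum', rfl⟩)
    have := rel_one h1
    simp only [map_mul, map_inv, FreeGroup.lift_apply_of, shiftF] at this ⊢
    exact this

/-- the shift endomorphism of `G_{n,P}^2` -/
def shiftHom (v : Fin n → ZMod 2) : GnP2 n →* GnP2 n :=
  PresentedGroup.toGroup (shift_rels v)

@[simp] lemma shiftHom_of (v : Fin n → ZMod 2) (p : PairIdx n × ZMod 2) :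
    shiftHom v (PresentedGroup.of p) = PresentedGroup.of (p.1, p.2 + ∑ x ∈ p.1.1, v x) :=
  PresentedGroup.toGroup.of _

lemma shiftHom_comp (v w : Fin n → ZMod 2) :
    (shiftHom v).comp (shiftHom w) = shiftHom (v + w) := by
  ext p
  simp only [MonoidHom.comp_apply, shiftHom_of, Pi.add_apply, Finset.sum_add_distrib]
  congr 1
  rw [Prod.mk.injEq]
  exact ⟨rfl, by abel⟩

lemma shiftHom_apply_apply (v w : Fin n → ZMod 2) (x : GnP2 n) :
    shiftHom v (shiftHom w x) = shiftHom (v + w) x :=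
  DFunLike.congr_fun (shiftHom_comp v w) x

lemma shiftHom_zero : shiftHom (0 : Fin n → ZMod 2) = MonoidHom.id _ := by
  ext p
  simp [shiftHom_of]

lemma vadd_self (v : Fin n → ZMod 2) : v + v = 0 := by
  funext x
  exact CharTwo.add_self_eq_zero _

lemma shiftHom_invol (v : Fin n → ZMod 2) (x : GnP2 n) : shiftHom v (shiftHom v x) = x := by
  rw [shiftHom_apply_apply, vadd_self, shiftHom_zero, MonoidHom.id_apply]

/-- the shift automorphism -/
def shiftAut (v : Fin n → ZMod 2) : MulAut (GnP2 n) where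
  toFun := shiftHom v
  invFun := shiftHom v
  left_inv := shiftHom_invol v
  right_inv := shiftHom_invol v
  map_mul' := map_mul _

/-- the action of the parity group on `G_{n,P}^2` -/
def phi (n : ℕ) : Multiplicative (Fin n → ZMod 2) →* MulAut (GnP2 n) where
  toFun v := shiftAut v.toAdd
  map_one' := by
    ext x
    show shiftHom 0 x = x
    rw [shiftHom_zero, MonoidHom.id_apply]
  map_mul' v w := by
    ext x
    exact (shiftHom_apply_apply _ _ x).symm

/-- the auxiliary semidirect product -/
abbrev SDP (n : ℕ) := GnP2 n ⋊[phi n] Multiplicative (Fin n → ZMod 2)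

/-- the map from the alphabet of `G_{n,D}^2` to the semidirect product -/
def fD (n : ℕ) : DIdx n → SDP n
  | Sum.inl s => SemidirectProduct.inl (PresentedGroup.of (s, 0))
  | Sum.inr i => SemidirectProduct.inr (Multiplicative.ofAdd (Pi.single i 1))

lemma pair_decomp (s : PairIdx n) : ∃ (i j : Fin n) (h : i ≠ j), s = mkPair i j h := by
  obtain ⟨i, j, hij, hs⟩ := Finset.card_eq_two.mp s.2
  exact ⟨i, j, hij, Subtype.ext hs⟩

lemma P_sq (s : PairIdx n) (ε : ZMod 2) :
    (PresentedGroup.of (s, ε) : GnP2 n) * PresentedGroup.of (s, ε) = 1 := by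
  obtain ⟨i, j, hij, rfl⟩ := pair_decomp s
  have := rel_one (show _ ∈ gnP2Rels n from Or.inl ⟨i, j, hij, ε, rfl⟩)
  simp only [map_mul] at this
  exact this

lemma P_inv (s : PairIdx n) (ε : ZMod 2) :
    (PresentedGroup.of (s, ε) : GnP2 n)⁻¹ = PresentedGroup.of (s, ε) :=
  inv_eq_of_mul_eq_one_right (P_sq s ε)

lemma tau_sq (i : Fin n) :
    (SemidirectProduct.inr (Multiplicative.ofAdd (Pi.single i 1)) : SDP n) *
      SemidirectProduct.inr (Multiplicative.ofAdd (Pi.single i 1)) = 1 := by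
  rw [← map_mul, ← ofAdd_add, vadd_self, ofAdd_zero, map_one]

@[simp] lemma fD_inl (s : PairIdx n) :
    fD n (Sum.inl s) = SemidirectProduct.inl (PresentedGroup.of (s, 0)) := rfl

@[simp] lemma fD_inr (i : Fin n) :
    fD n (Sum.inr i) = SemidirectProduct.inr (Multiplicative.ofAdd (Pi.single i 1)) := rfl

lemma mkPair_val (i j : Fin n) (h : i ≠ j) : (mkPair i j h).1 = {i, j} := rfl

lemma inr_inv (u : Fin n → ZMod 2) :
    (SemidirectProduct.inr (Multiplicative.ofAdd u) : SDP n)⁻¹ =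
      SemidirectProduct.inr (Multiplicative.ofAdd u) :=
  inv_eq_of_mul_eq_one_right (by rw [← map_mul, ← ofAdd_add, vadd_self, ofAdd_zero, map_one])

lemma fD_inv (x : DIdx n) : (fD n x)⁻¹ = fD n x := by
  cases x with
  | inl s =>
      rw [fD_inl]
      exact inv_eq_of_mul_eq_one_right (by rw [← map_mul, P_sq, map_one])
  | inr i =>
      rw [fD_inr]
      exact inr_inv _

lemma phi_apply (v : Fin n → ZMod 2) (x : GnP2 n) :
    (phi n) (Multiplicative.ofAdd v) x = shiftHom v x := rfl

lemma conj_aut (u : Fin n → ZMod 2) (g : GnP2 n) :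
    (SemidirectProduct.inr (Multiplicative.ofAdd u) : SDP n) * SemidirectProduct.inl g *
      (SemidirectProduct.inr (Multiplicative.ofAdd u))⁻¹ =
      SemidirectProduct.inl (shiftHom u g) := by
  rw [← map_inv]
  exact (SemidirectProduct.inl_aut (Multiplicative.ofAdd u) g).symm

lemma P_comm (i j k l : Fin n) (hij : i ≠ j) (hkl : k ≠ l)
    (h1 : i ≠ k) (h2 : i ≠ l) (h3 : j ≠ k) (h4 : j ≠ l) (ε₁ ε₂ : ZMod 2) :
    (PresentedGroup.of (mkPair i j hij, ε₁) : GnP2 n) * PresentedGroup.of (mkPair k l hkl, ε₂) *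
      (PresentedGroup.of (mkPair i j hij, ε₁))⁻¹ * (PresentedGroup.of (mkPair k l hkl, ε₂))⁻¹
      = 1 := by
  have := rel_one (show _ ∈ gnP2Rels n from
    Or.inr (Or.inl ⟨i, j, k, l, hij, hkl, ε₁, ε₂, h1, h2, h3, h4, rfl⟩))
  simp only [map_mul, map_inv] at this
  exact this

lemma P_triple (i j k : Fin n) (hij : i ≠ j) (hik : i ≠ k) (hjk : j ≠ k)
    (εij εik εjk : ZMod 2) (hsum : εij + εik + εjk = 0) :
    (PresentedGroup.of (mkPair i j hij, εij) : GnP2 n) *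
      PresentedGroup.of (mkPair i k hik, εik) * PresentedGroup.of (mkPair j k hjk, εjk) *
      (PresentedGroup.of (mkPair j k hjk, εjk) * PresentedGroup.of (mkPair i k hik, εik) *
       PresentedGroup.of (mkPair i j hij, εij))⁻¹ = 1 := by
  have := rel_one (show _ ∈ gnP2Rels n from
    Or.inr (Or.inr ⟨i, j, k, hij, hik, hjk, εij, εik, εjk, hsum, rfl⟩))
  simp only [map_mul, map_inv] at this
  exact this

lemma shift_fix (i j : Fin n) (h : i ≠ j) (u : Fin n → ZMod 2)
    (hu : u i + u j = 0) :
    shiftHom u (PresentedGroup.of (mkPair i j h, 0) : GnP2 n) =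
      PresentedGroup.of (mkPair i j h, 0) := by
  rw [shiftHom_of]
  have : (0 : ZMod 2) + ∑ x ∈ (mkPair i j h).1, u x = 0 := by
    rw [mkPair_val, Finset.sum_pair h, hu, add_zero]
  rw [this]

lemma D_rels : ∀ r ∈ gnD2Rels n, FreeGroup.lift (fD n) r = 1 := by
  rintro r (⟨i, j, h, rfl⟩ | ⟨i, j, k, l, hij, hkl, h1, h2, h3, h4, rfl⟩ |
    ⟨i, j, k, hij, hik, hjk, rfl⟩ | ⟨i, rfl⟩ | ⟨i, j, rfl⟩ | ⟨i, j, h, rfl⟩ |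
    ⟨i, j, k, h, hki, hkj, rfl⟩)
  · simp only [map_mul, FreeGroup.lift_apply_of, fD_inl]
    rw [← map_mul, P_sq, map_one]
  · simp only [map_mul, map_inv, FreeGroup.lift_apply_of, fD_inl]
    simp only [← map_inv, ← map_mul]
    rw [P_comm i j k l hij hkl h1 h2 h3 h4 0 0, map_one]
  · simp only [map_mul, map_inv, FreeGroup.lift_apply_of, fD_inl]
    simp only [← map_inv, ← map_mul]
    rw [P_triple i j k hij hik hjk 0 0 0 (by decide), map_one]
  · simp only [map_mul, FreeGroup.lift_apply_of, fD_inr]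
    exact tau_sq i
  · simp only [map_mul, map_inv, FreeGroup.lift_apply_of, fD_inr]
    simp only [← map_inv, ← map_mul]
    rw [show (Multiplicative.ofAdd (Pi.single i 1) * Multiplicative.ofAdd (Pi.single j 1) *
        (Multiplicative.ofAdd (Pi.single i 1))⁻¹ *
        (Multiplicative.ofAdd (Pi.single j 1))⁻¹ : Multiplicative (Fin n → ZMod 2)) = 1 from
      by rw [mul_comm (Multiplicative.ofAdd (Pi.single i 1))]; group, map_one]
  · -- detour relation
    simp only [map_mul, map_inv, FreeGroup.lift_apply_of, fD_inl, fD_inr]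
    set g : GnP2 n := PresentedGroup.of (mkPair i j h, 0) with hg
    set wi : Fin n → ZMod 2 := Pi.single i 1 with hwi
    set wj : Fin n → ZMod 2 := Pi.single j 1 with hwj
    have h1 : (SemidirectProduct.inr (Multiplicative.ofAdd wi) : SDP n) *
        SemidirectProduct.inr (Multiplicative.ofAdd wj) =
        SemidirectProduct.inr (Multiplicative.ofAdd (wi + wj)) := by
      rw [← map_mul, ← ofAdd_add]
    have h1' : (SemidirectProduct.inr (Multiplicative.ofAdd wj) : SDP n) *
        SemidirectProduct.inr (Multiplicative.ofAdd wi) =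
        SemidirectProduct.inr (Multiplicative.ofAdd (wi + wj)) := by
      rw [← map_mul, ← ofAdd_add, add_comm]
    have hu : wi i + wj j = (0 : ZMod 2) → True := fun _ => trivial
    have hfix : shiftHom (wi + wj) g = g := by
      rw [hg]
      refine shift_fix i j h _ ?_
      rw [hwi, hwj]
      simp only [Pi.add_apply, Pi.single_eq_same, Pi.single_eq_of_ne h.symm,
        Pi.single_eq_of_ne h]
      decide
    calc SemidirectProduct.inr (Multiplicative.ofAdd wi) *
          SemidirectProduct.inr (Multiplicative.ofAdd wj) * SemidirectProduct.inl g *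
          SemidirectProduct.inr (Multiplicative.ofAdd wj) *
          SemidirectProduct.inr (Multiplicative.ofAdd wi) * (SemidirectProduct.inl g)⁻¹
        = (SemidirectProduct.inr (Multiplicative.ofAdd wi) *
            SemidirectProduct.inr (Multiplicative.ofAdd wj)) * SemidirectProduct.inl g *
          (SemidirectProduct.inr (Multiplicative.ofAdd wj) *
            SemidirectProduct.inr (Multiplicative.ofAdd wi)) *
          (SemidirectProduct.inl g)⁻¹ := by group
      _ = SemidirectProduct.inr (Multiplicative.ofAdd (wi + wj)) * SemidirectProduct.inl g *
          (SemidirectProduct.inr (Multiplicative.ofAdd (wi + wj)))⁻¹ *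
          (SemidirectProduct.inl g)⁻¹ := by rw [h1, h1', inr_inv]
      _ = SemidirectProduct.inl (shiftHom (wi + wj) g) * (SemidirectProduct.inl g)⁻¹ := by
          rw [conj_aut]
      _ = 1 := by rw [hfix, mul_inv_cancel]
  · -- crossing commutes with far tau
    simp only [map_mul, map_inv, FreeGroup.lift_apply_of, fD_inl, fD_inr]
    set g : GnP2 n := PresentedGroup.of (mkPair i j h, 0) with hg
    set w : Fin n → ZMod 2 := Pi.single k 1 with hw
    have hc : (SemidirectProduct.inr (Multiplicative.ofAdd w) : SDP n) *
        SemidirectProduct.inl g * (SemidirectProduct.inr (Multiplicative.ofAdd w))⁻¹ =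
        SemidirectProduct.inl g := by
      rw [conj_aut]
      congr 1
      rw [hg]
      refine shift_fix i j h _ ?_
      rw [hw, Pi.single_eq_of_ne hki.symm, Pi.single_eq_of_ne hkj.symm, add_zero]
    have hcomm : (SemidirectProduct.inl g : SDP n) *
        SemidirectProduct.inr (Multiplicative.ofAdd w) =
        SemidirectProduct.inr (Multiplicative.ofAdd w) * SemidirectProduct.inl g := by
      conv_lhs => rw [← hc]
      rw [inv_mul_cancel_right]
    rw [hcomm, mul_inv_cancel_right, mul_inv_cancel]

/-- the homomorphism from `G_{n,D}^2` to the semidirect product -/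
def PhiD (n : ℕ) : GnD2 n →* SDP n := PresentedGroup.toGroup (D_rels (n := n))

lemma update_eq (N : Fin n → ZMod 2) (i : Fin n) :
    Function.update N i (N i + 1) = N + Pi.single i 1 := by
  funext x
  by_cases hx : x = i
  · subst hx; simp
  · simp [Function.update_of_ne hx, Pi.single_eq_of_ne hx]

lemma key_lemma (L : List (DIdx n × Bool)) (N : Fin n → ZMod 2) :
    chiWord n L N = shiftHom N ((L.map fun p => fD n p.1).prod).left := by
  induction L generalizing N with
  | nil => simp [chiWord, SemidirectProduct.one_left]
  | cons p L ih =>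
      obtain ⟨x, b⟩ := p
      cases x with
      | inl s =>
          rw [show chiWord n ((Sum.inl s, b) :: L) N =
            PresentedGroup.of (s, ∑ x ∈ s.1, N x) * chiWord n L N from rfl]
          simp only [List.map_cons, List.prod_cons, SemidirectProduct.mul_left]
          rw [show fD n (Sum.inl s) = SemidirectProduct.inl (PresentedGroup.of (s, 0)) from rfl]
          rw [SemidirectProduct.left_inl, SemidirectProduct.right_inl, map_one,
            MulAut.one_apply, map_mul, shiftHom_of, ih N, zero_add]
      | inr i =>
          rw [show chiWord n ((Sum.inr i, b) :: L) N =
            chiWord n L (Function.update N i (N i + 1)) from rfl]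
          simp only [List.map_cons, List.prod_cons, SemidirectProduct.mul_left]
          rw [show fD n (Sum.inr i) =
            SemidirectProduct.inr (Multiplicative.ofAdd (Pi.single i 1)) from rfl]
          rw [SemidirectProduct.left_inr, SemidirectProduct.right_inr, one_mul]
          rw [ih, update_eq, phi_apply, shiftHom_apply_apply]

lemma PhiD_mkD (L : List (DIdx n × Bool)) :
    PhiD n (mkD n L) = ((L.map fun p => fD n p.1).prod) := by
  have h1 : PhiD n (mkD n L) = FreeGroup.lift (fD n) (FreeGroup.mk L) := rfl
  rw [h1, FreeGroup.lift_mk]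
  congr 1
  apply List.map_congr_left
  intro p _
  cases hb : p.2 <;> simp [fD_inv]

end Stmt7Aux

/-- the map `χ : H_{n,D}^2 → G_{n,P}^2` is well defined: its value on a word
(with each `τ_i` occurring an even number of times) depends only on the element of
`G_{n,D}^2` the word represents. -/
theorem stmt7 (n : ℕ) (hn : 2 < n) (L₁ L₂ : List (DIdx n × Bool))
    (hL₁ : ∀ i : Fin n, Even (tauCount i L₁))
    (h : mkD n L₁ = mkD n L₂) :
    chiWord n L₁ (fun _ => 0) = chiWord n L₂ (fun _ => 0) := by
  have e1 := key_lemma L₁ (fun _ => (0 : ZMod 2))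
  have e2 := key_lemma L₂ (fun _ => (0 : ZMod 2))
  rw [e1, e2, ← PhiD_mkD, ← PhiD_mkD, h]
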